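/- Let k ≥ 1 be a positive integer and let G = (U,V,E) be a bipartite graph. Then G has a k-star covering if and only if |Γ(S)| ≥ (1/k)·|S| for every S ⊆ U and every S ⊆ V. -/

import Mathlib

set_option linter.unusedSectionVars false
set_option maxHeartbeats 1000000

open scoped Classical

noncomputable section

variable {U V : Type*}

/-- The neighbourhood `Γ(S) ⊆ V` of a set `S` of left vertices of the bipartite
graph with edge set `E ⊆ U × V`. -/
def nbhd (E : Finset (U × V)) (S : Finset U) : Finset V :=
  (E.filter fun p => p.1 ∈ S).image Prod.snd

/-- The neighbourhood `Γ(T) ⊆ U` of a set `T` of right vertices. -/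
def nbhdR (E : Finset (U × V)) (T : Finset V) : Finset U :=
  (E.filter fun p => p.2 ∈ T).image Prod.fst

/-- The degree of a left vertex `u` in the bipartite graph with edge set `E`. -/
def degL (E : Finset (U × V)) (u : U) : ℕ := (E.filter fun p => p.1 = u).card

/-- The degree of a right vertex `v` in the bipartite graph with edge set `E`. -/
def degR (E : Finset (U × V)) (v : V) : ℕ := (E.filter fun p => p.2 = v).card

/-- The bipartite graph on the vertex set `U ⊕ V` determined by an edge set
`F ⊆ U × V`. -/
def mkGraph (F : Finset (U × V)) : SimpleGraph (U ⊕ V) :=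
  SimpleGraph.fromRel fun x y => ∃ p ∈ F, x = Sum.inl p.1 ∧ y = Sum.inr p.2

/-- The edges of `F` lying inside the connected component `c` of `mkGraph F`. -/
def componentEdges (F : Finset (U × V)) (c : (mkGraph F).ConnectedComponent) :
    Finset (U × V) :=
  F.filter fun p => (mkGraph F).connectedComponentMk (Sum.inl p.1) = c

/-- An `(s,t)`-matching in the bipartite graph `G = (U,V,E)`: a subset `F ⊆ E` such
that in `H = (U,V,F)` every connected component is a tree (i.e. `H` is acyclic) with
at most `t` edges, and every vertex `u ∈ U` has degree exactly `s` in `H`. -/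
def IsSTMatching (s t : ℕ) (E F : Finset (U × V)) : Prop :=
  F ⊆ E ∧ (mkGraph F).IsAcyclic ∧
    (∀ c : (mkGraph F).ConnectedComponent, (componentEdges F c).card ≤ t) ∧
    ∀ u : U, degL F u = s

/-- A `k`-star covering of the bipartite graph `G = (U,V,E)`: a subset `F ⊆ E` such
that in `H = (U,V,F)` every vertex of `U ∪ V` has degree at least `1` and every
connected component is a star with at most `k` edges (all edges of the component
share a common vertex). -/
def IsStarCover (k : ℕ) (E F : Finset (U × V)) : Prop :=
  F ⊆ E ∧
    (∀ x : U ⊕ V, ∃ p ∈ F, x = Sum.inl p.1 ∨ x = Sum.inr p.2) ∧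
    ∀ c : (mkGraph F).ConnectedComponent,
      (componentEdges F c).card ≤ k ∧
      ∃ x : U ⊕ V, ∀ p ∈ componentEdges F c, Sum.inl p.1 = x ∨ Sum.inr p.2 = x

/-! ### Auxiliary machinery -/

namespace StarCoverAux

/-! #### Kernels of fixed-point-free functions with 2-colouring -/

section Kernel
variable {X : Type*} [Fintype X] (h : X → X)
variable {X : Type*} [Fintype X] (h : X → X)

def Per (x : X) : Prop := ∃ n, 0 < n ∧ h^[n] x = x

lemma per_apply {x : X} (hx : Per h x) : Per h (h x) := by
  obtain ⟨n, hn, hxn⟩ := hx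
  exact ⟨n, hn, by rw [← Function.iterate_succ_apply, Function.iterate_succ_apply', hxn]⟩

lemma per_pre {x y : X} (hy : h y = x) (hx : ¬ Per h x) : ¬ Per h y :=
  fun hP => hx (hy ▸ per_apply h hP)

lemma exists_per_iter_lt (x : X) : ∃ n, n < Fintype.card X ∧ Per h (h^[n] x) := by
  have : ¬ Function.Injective (fun i : Fin (Fintype.card X + 1) => h^[(i : ℕ)] x) := by
    intro hinj
    have := Fintype.card_le_of_injective _ hinj
    simp at this
  rw [Function.not_injective_iff] at this
  obtain ⟨i, j, hij, hne⟩ := this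
  have hv : (i : ℕ) ≠ (j : ℕ) := fun e => hne (Fin.val_injective e)
  have hi := i.isLt
  have hj := j.isLt
  rcases hv.lt_or_gt with hlt | hlt
  · exact ⟨(i : ℕ), by omega, ⟨j - i, by omega, by
      rw [← Function.iterate_add_apply, Nat.sub_add_cancel hlt.le]; exact hij.symm⟩⟩
  · exact ⟨(j : ℕ), by omega, ⟨i - j, by omega, by
      rw [← Function.iterate_add_apply, Nat.sub_add_cancel hlt.le]; exact hij⟩⟩

lemma exists_per_iter (x : X) : ∃ n, Per h (h^[n] x) :=
  let ⟨n, _, hp⟩ := exists_per_iter_lt h x; ⟨n, hp⟩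

/-- distance to the set of periodic points -/
def dP (x : X) : ℕ := Nat.find (exists_per_iter h x)

lemma dP_spec (x : X) : Per h (h^[dP h x] x) := Nat.find_spec (exists_per_iter h x)

lemma dP_lt (x : X) : dP h x < Fintype.card X := by
  obtain ⟨n, hn, hp⟩ := exists_per_iter_lt h x
  exact lt_of_le_of_lt (Nat.find_le hp) hn

lemma dP_eq_zero_iff (x : X) : dP h x = 0 ↔ Per h x := by
  rw [dP, Nat.find_eq_zero]; simp

lemma dP_succ {x y : X} (hy : h y = x) (hx : ¬ Per h x) : dP h y = dP h x + 1 := by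
  have hyP : ¬ Per h y := per_pre h hy hx
  have h0 : dP h y ≠ 0 := fun e => hyP ((dP_eq_zero_iff h y).mp e)
  have hle : dP h y ≤ dP h x + 1 := by
    apply Nat.find_le
    rw [Function.iterate_succ_apply, hy]
    exact dP_spec h x
  have h2 : h^[dP h y] y = h^[dP h y - 1] x := by
    conv_lhs => rw [show dP h y = (dP h y - 1) + 1 by omega]
    rw [Function.iterate_succ_apply, hy]
  have hge : dP h x ≤ dP h y - 1 := by
    apply Nat.find_le
    rw [← h2]; exact dP_spec h y
  omega

def Cnp : ℕ → X → Prop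
  | 0, _ => False
  | n+1, x => ∃ y, h y = x ∧ ¬ Cnp n y

def Ct (x : X) : Prop := Cnp h (Fintype.card X - dP h x) x

lemma ct_iff {x : X} (hx : ¬ Per h x) : Ct h x ↔ ∃ y, h y = x ∧ ¬ Ct h y := by
  have hd := dP_lt h x
  unfold Ct
  rw [show Fintype.card X - dP h x = (Fintype.card X - dP h x - 1) + 1 by omega]
  show (∃ y, h y = x ∧ ¬ Cnp h _ y) ↔ _
  apply exists_congr; intro y
  apply and_congr_right; intro hy
  rw [dP_succ h hy hx, Nat.sub_sub]

/-- assigned: has a non-periodic, non-covered preimage -/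
def Asg (x : X) : Prop := ∃ y, ¬ Per h y ∧ h y = x ∧ ¬ Ct h y

/-- predecessor along the cycle, for periodic points -/
def pred (x : X) : X := if hx : Per h x then h^[Nat.find hx - 1] x else x

lemma h_pred {x : X} (hx : Per h x) : h (pred h x) = x := by
  rw [pred, dif_pos hx]
  have h1 := (Nat.find_spec hx).1
  have h2 := (Nat.find_spec hx).2
  have h3 : h (h^[Nat.find hx - 1] x) = h^[Nat.find hx - 1 + 1] x :=
    (Function.iterate_succ_apply' h _ x).symm
  rw [h3, show Nat.find hx - 1 + 1 = Nat.find hx by omega]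
  exact h2

lemma pred_per {x : X} (hx : Per h x) : Per h (pred h x) := by
  rw [pred, dif_pos hx]
  have h1 := (Nat.find_spec hx).1
  have h2 := (Nat.find_spec hx).2
  exact ⟨Nat.find hx, h1, by
    rw [← Function.iterate_add_apply, Nat.add_comm, Function.iterate_add_apply, h2]⟩

lemma h_inj_per {x y : X} (hx : Per h x) (hy : Per h y) (hxy : h x = h y) : x = y := by
  obtain ⟨a, ha, hax⟩ := hx
  obtain ⟨b, hb, hby⟩ := hy
  have hxab : h^[a*b] x = x := by
    rw [Function.iterate_mul]; exact Function.iterate_fixed hax b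
  have hyab : h^[a*b] y = y := by
    rw [mul_comm, Function.iterate_mul]; exact Function.iterate_fixed hby a
  have hab : 0 < a * b := Nat.mul_pos ha hb
  calc x = h^[a*b] x := hxab.symm
    _ = h^[a*b - 1] (h x) := by rw [← Function.iterate_succ_apply]; congr 1; omega
    _ = h^[a*b - 1] (h y) := by rw [hxy]
    _ = h^[a*b] y := by rw [← Function.iterate_succ_apply]; congr 1; omega
    _ = y := hyab

lemma pred_apply {x : X} (hx : Per h x) : pred h (h x) = x := by
  have hhx : Per h (h x) := per_apply h hx
  exact h_inj_per h (pred_per h hhx) hx (by rw [h_pred h hhx])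

lemma pred_iter_per {x : X} (hx : Per h x) (j : ℕ) : Per h ((pred h)^[j] x) := by
  induction j with
  | zero => exact hx
  | succ n ih => rw [Function.iterate_succ_apply']; exact pred_per h ih

lemma pred_iter_apply {x : X} (hx : Per h x) (j : ℕ) :
    (pred h)^[j+1] (h x) = (pred h)^[j] x := by
  rw [Function.iterate_succ_apply, pred_apply h hx]

/-- some vertex of the cycle of x is assigned -/
def Jex (x : X) : Prop := ∃ j, 0 < j ∧ Asg h ((pred h)^[j] x)

variable (col : X → Bool)

def Ker (x : X) : Prop :=
  if Per h x then
    Asg h x ∨ (if hJ : Jex h x then Even (Nat.find hJ) else col x = true)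
  else Ct h x

lemma ker_of_not_per {x : X} (hx : ¬ Per h x) : Ker h col x ↔ Ct h x := by
  rw [Ker, if_neg hx]

lemma ker_of_per {x : X} (hx : Per h x) :
    Ker h col x ↔ (Asg h x ∨ (if hJ : Jex h x then Even (Nat.find hJ) else col x = true)) := by
  rw [Ker, if_pos hx]

lemma pred_iter_apply' {x : X} (hx : Per h x) {i : ℕ} (hi : 0 < i) :
    (pred h)^[i] (h x) = (pred h)^[i-1] x := by
  conv_lhs => rw [show i = (i-1)+1 by omega]
  exact pred_iter_apply h hx _

lemma jex_succ {x : X} (hx : Per h x) (hAx : ¬ Asg h x) (hJ : Jex h x) :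
    ∃ hJ' : Jex h (h x), Nat.find hJ' = Nat.find hJ + 1 := by
  have hspec := Nat.find_spec hJ
  set j := Nat.find hJ with hj
  have hJ' : Jex h (h x) := ⟨j + 1, by omega, by
    rw [pred_iter_apply h hx j]; exact hspec.2⟩
  refine ⟨hJ', ?_⟩
  refine (Nat.find_eq_iff _).mpr ?_
  refine ⟨⟨by omega, by rw [pred_iter_apply h hx j]; exact hspec.2⟩, ?_⟩
  intro i hi hcon
  obtain ⟨hi0, hA⟩ := hcon
  rw [pred_iter_apply' h hx hi0] at hA
  rcases Nat.eq_zero_or_pos (i - 1) with h0 | hpos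
  · rw [h0] at hA; exact hAx hA
  · exact Nat.find_min hJ (show i - 1 < j by omega) ⟨hpos, hA⟩

lemma jex_pred {x : X} (hx : Per h x) (hJ : Jex h x) (h2 : 2 ≤ Nat.find hJ) :
    ∃ hJ' : Jex h (pred h x), Nat.find hJ' = Nat.find hJ - 1 := by
  have hspec := Nat.find_spec hJ
  set j := Nat.find hJ with hj
  have key : ∀ i, (pred h)^[i] (pred h x) = (pred h)^[i+1] x := fun i =>
    (Function.iterate_succ_apply (pred h) i x).symm
  have hJ' : Jex h (pred h x) := ⟨j - 1, by omega, by
    rw [key, show j - 1 + 1 = j by omega]; exact hspec.2⟩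
  refine ⟨hJ', ?_⟩
  refine (Nat.find_eq_iff _).mpr ?_
  refine ⟨⟨by omega, by rw [key, show j - 1 + 1 = j by omega]; exact hspec.2⟩, ?_⟩
  intro i hi hcon
  obtain ⟨hi0, hA⟩ := hcon
  rw [key] at hA
  exact Nat.find_min hJ (show i + 1 < j by omega) ⟨by omega, hA⟩

lemma not_jex_apply {x : X} (hx : Per h x) (hAx : ¬ Asg h x) (hJ : ¬ Jex h x) :
    ¬ Jex h (h x) := by
  rintro ⟨i, hi, hA⟩
  rw [pred_iter_apply' h hx hi] at hA
  rcases Nat.eq_zero_or_pos (i - 1) with h0 | hpos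
  · rw [h0] at hA; exact hAx hA
  · exact hJ ⟨i - 1, hpos, hA⟩

lemma not_jex_pred {x : X} (hx : Per h x) (hJ : ¬ Jex h x) : ¬ Jex h (pred h x) := by
  rintro ⟨i, hi, hA⟩
  have hkey : (pred h)^[i] (pred h x) = (pred h)^[i+1] x :=
    (Function.iterate_succ_apply (pred h) i x).symm
  rw [hkey] at hA
  exact hJ ⟨i + 1, by omega, hA⟩

variable (col : X → Bool)

theorem ker_prop1 (hcol : ∀ x, col (h x) = ! col x) :
    ∀ x, ¬ Ker h col x → Ker h col (h x) := by
  intro x hKx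
  by_cases hx : Per h x
  · have hhx : Per h (h x) := per_apply h hx
    rw [ker_of_per h col hx] at hKx
    push_neg at hKx
    obtain ⟨hAx, hrest⟩ := hKx
    rw [ker_of_per h col hhx]
    by_cases hAhx : Asg h (h x)
    · exact Or.inl hAhx
    · right
      by_cases hJ : Jex h x
      · rw [dif_pos hJ] at hrest
        obtain ⟨hJ', hfind⟩ := jex_succ h hx hAx hJ
        rw [dif_pos hJ', hfind]
        rw [Nat.even_add_one]
        simpa using hrest
      · rw [dif_neg hJ] at hrest
        have hcx : col x = false := by
          cases hc : col x
          · rfl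
          · exact absurd hc hrest
        rw [dif_neg (not_jex_apply h hx hAx hJ)]
        rw [hcol x, hcx]
        rfl
  · rw [ker_of_not_per h col hx] at hKx
    by_cases hhx : Per h (h x)
    · rw [ker_of_per h col hhx]
      exact Or.inl ⟨x, hx, rfl, hKx⟩
    · rw [ker_of_not_per h col hhx, ct_iff h hhx]
      exact ⟨x, rfl, hKx⟩

theorem ker_prop2 (hcol : ∀ x, col (h x) = ! col x) :
    ∀ x, Ker h col x → ∃ y, h y = x ∧ ¬ Ker h col y := by
  intro x hKx
  by_cases hx : Per h x
  · rw [ker_of_per h col hx] at hKx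
    rcases hKx with hAx | hrest
    · obtain ⟨y, hyP, hy, hCty⟩ := hAx
      exact ⟨y, hy, by rw [ker_of_not_per h col hyP]; exact hCty⟩
    · refine ⟨pred h x, h_pred h hx, ?_⟩
      have hpx : Per h (pred h x) := pred_per h hx
      rw [ker_of_per h col hpx]
      push_neg
      by_cases hJ : Jex h x
      · rw [dif_pos hJ] at hrest
        have hspec := Nat.find_spec hJ
        have h2 : 2 ≤ Nat.find hJ := by
          have h0 := hspec.1
          have h1 : Nat.find hJ ≠ 1 := by
            intro e; rw [e] at hrest; exact absurd hrest (by decide)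
          omega
        obtain ⟨hJ', hfind⟩ := jex_pred h hx hJ h2
        have hApx : ¬ Asg h (pred h x) := by
          intro hA
          exact Nat.find_min hJ (show 1 < Nat.find hJ by omega)
            ⟨one_pos, by simpa using hA⟩
        refine ⟨hApx, ?_⟩
        rw [dif_pos hJ', hfind]
        intro hcon
        obtain ⟨a, ha⟩ := hrest
        obtain ⟨b, hb⟩ := hcon
        omega
      · rw [dif_neg hJ] at hrest
        have hApx : ¬ Asg h (pred h x) := fun hA => hJ ⟨1, one_pos, by simpa using hA⟩
        refine ⟨hApx, ?_⟩
        rw [dif_neg (not_jex_pred h hx hJ)]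
        have hc := hcol (pred h x)
        rw [h_pred h hx, hrest] at hc
        intro hcon
        rw [hcon] at hc
        simp at hc
  · rw [ker_of_not_per h col hx, ct_iff h hx] at hKx
    obtain ⟨y, hy, hCty⟩ := hKx
    have hyP : ¬ Per h y := per_pre h hy hx
    exact ⟨y, hy, by rw [ker_of_not_per h col hyP]; exact hCty⟩



end Kernel

/-! #### Hall-type selection of a `k`-bounded choice function -/


lemma nbhd_swap (E : Finset (U × V)) (T : Finset V) :
    nbhd (E.image Prod.swap) T = nbhdR E T := by
  ext u
  simp only [nbhd, nbhdR, Finset.mem_image, Finset.mem_filter]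
  constructor
  · rintro ⟨⟨v', u'⟩, ⟨⟨q, hq, hqeq⟩, hv⟩, rfl⟩
    rw [Prod.ext_iff] at hqeq
    have h1 : q.2 = v' := hqeq.1
    have h2 : q.1 = u' := hqeq.2
    exact ⟨q, ⟨hq, by rw [h1]; exact hv⟩, h2⟩
  · rintro ⟨p, ⟨hp, hpt⟩, rfl⟩
    exact ⟨p.swap, ⟨⟨p, hp, rfl⟩, hpt⟩, rfl⟩

lemma hall_fun [Fintype U] [Fintype V] (k : ℕ) (hk : 1 ≤ k) (E : Finset (U × V))
    (hH : ∀ S : Finset U, S.card ≤ k * (nbhd E S).card) :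
    ∃ f : U → V, (∀ u, (u, f u) ∈ E) ∧
      ∀ v, (Finset.univ.filter fun u => f u = v).card ≤ k := by
  set t : U → Finset (V × Fin k) := fun u => (nbhd E {u}) ×ˢ Finset.univ with ht
  have hbi : ∀ S : Finset U, S.biUnion t = (nbhd E S) ×ˢ Finset.univ := by
    intro S
    ext ⟨v, i⟩
    simp only [ht, Finset.mem_biUnion, Finset.mem_product, Finset.mem_univ, and_true,
      nbhd, Finset.mem_image, Finset.mem_filter, Finset.mem_singleton]
    constructor
    · rintro ⟨u, hu, p, ⟨hp, hp1⟩, hp2⟩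
      exact ⟨p, ⟨hp, hp1 ▸ hu⟩, hp2⟩
    · rintro ⟨p, ⟨hp, hp1⟩, hp2⟩
      exact ⟨p.1, hp1, p, ⟨hp, rfl⟩, hp2⟩
  have hhall : ∀ S : Finset U, S.card ≤ (S.biUnion t).card := by
    intro S
    rw [hbi, Finset.card_product]
    simpa [mul_comm] using hH S
  obtain ⟨f', hinj, hmem⟩ := (Finset.all_card_le_biUnion_card_iff_exists_injective t).mp hhall
  refine ⟨fun u => (f' u).1, ?_, ?_⟩
  · intro u
    have := hmem u
    rw [ht] at this
    simp only [Finset.mem_product, nbhd, Finset.mem_image, Finset.mem_filter,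
      Finset.mem_singleton] at this
    obtain ⟨⟨p, ⟨hp, hp1⟩, hp2⟩, -⟩ := this
    have : p = (u, (f' u).1) := Prod.ext hp1 hp2
    exact this ▸ hp
  · intro v
    have : ((Finset.univ.filter fun u => (f' u).1 = v)).card ≤ (Finset.univ : Finset (Fin k)).card := by
      apply Finset.card_le_card_of_injOn (fun u => (f' u).2) (fun _ _ => Finset.mem_univ _)
      intro a ha b hb hab
      simp only [Finset.coe_filter, Set.mem_setOf_eq] at ha hb
      exact hinj (Prod.ext (ha.2.trans hb.2.symm) hab)
    simpa using this


/-! #### From a centre function to a star cover -/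

lemma mkGraph_adj {F : Finset (U × V)} {p : U × V} (hp : p ∈ F) :
    (mkGraph F).Adj (Sum.inl p.1) (Sum.inr p.2) := by
  rw [mkGraph, SimpleGraph.fromRel_adj]
  exact ⟨by simp, Or.inl ⟨p, hp, rfl, rfl⟩⟩

section Ctr
variable {F : Finset (U × V)} {ctr : U ⊕ V → U ⊕ V}

def CtrHyp (F : Finset (U × V)) (ctr : U ⊕ V → U ⊕ V) : Prop :=
  ∀ p ∈ F, (ctr (Sum.inl p.1) = Sum.inl p.1 ∧ ctr (Sum.inr p.2) = Sum.inl p.1) ∨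
        (ctr (Sum.inl p.1) = Sum.inr p.2 ∧ ctr (Sum.inr p.2) = Sum.inr p.2)

lemma ctr_adj (H1 : CtrHyp F ctr) : ∀ x y : U ⊕ V, (mkGraph F).Adj x y → ctr x = ctr y := by
  intro x y hxy
  rw [mkGraph, SimpleGraph.fromRel_adj] at hxy
  obtain ⟨-, h | h⟩ := hxy
  · obtain ⟨p, hp, rfl, rfl⟩ := h
    rcases H1 p hp with ⟨h1, h2⟩ | ⟨h1, h2⟩ <;> rw [h1, h2]
  · obtain ⟨p, hp, rfl, rfl⟩ := h
    rcases H1 p hp with ⟨h1, h2⟩ | ⟨h1, h2⟩ <;> rw [h1, h2]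

lemma ctr_reachable (H1 : CtrHyp F ctr) {x y : U ⊕ V} (hxy : (mkGraph F).Reachable x y) : ctr x = ctr y := by
  obtain ⟨w⟩ := hxy
  induction w with
  | nil => rfl
  | cons hadj _ ih => exact (ctr_adj H1 _ _ hadj).trans ih

lemma isStarCover_of_ctr (H1 : CtrHyp F ctr) (k : ℕ) (E : Finset (U × V)) (hFE : F ⊆ E)
    (H2 : ∀ x : U ⊕ V, (F.filter fun p => ctr (Sum.inl p.1) = x).card ≤ k)
    (H3 : ∀ x : U ⊕ V, ∃ p ∈ F, x = Sum.inl p.1 ∨ x = Sum.inr p.2) :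
    IsStarCover k E F := by
  refine ⟨hFE, H3, ?_⟩
  intro c
  obtain ⟨w, hw⟩ := c.exists_rep
  have key : ∀ p ∈ componentEdges F c, ctr (Sum.inl p.1) = ctr w := by
    intro p hp
    rw [componentEdges, Finset.mem_filter] at hp
    exact ctr_reachable H1
      ((SimpleGraph.ConnectedComponent.eq).mp (hp.2.trans hw.symm))
  constructor
  · refine le_trans (Finset.card_le_card ?_) (H2 (ctr w))
    intro p hp
    rw [Finset.mem_filter]
    exact ⟨(Finset.mem_filter.mp hp).1, key p hp⟩
  · refine ⟨ctr w, fun p hp => ?_⟩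
    have hpF : p ∈ F := (Finset.mem_filter.mp hp).1
    rcases H1 p hpF with ⟨h1, -⟩ | ⟨h1, -⟩
    · exact Or.inl (h1.symm.trans (key p hp))
    · exact Or.inr (h1.symm.trans (key p hp))

end Ctr


end StarCoverAux

namespace StarCoverAux

/-! #### Counting: a star cover implies the Hall-type conditions -/

lemma count_left [Fintype U] [Fintype V] {k : ℕ} {E F : Finset (U × V)}
    (hSC : IsStarCover k E F) (S : Finset U) : S.card ≤ k * (nbhd E S).card := by
  obtain ⟨hFE, hcov, hcomp⟩ := hSC
  have hex : ∀ u : U, ∃ p, p ∈ F ∧ p.1 = u := by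
    intro u
    obtain ⟨p, hp, hor⟩ := hcov (Sum.inl u)
    rcases hor with h | h
    · exact ⟨p, hp, (Sum.inl.inj h).symm⟩
    · exact absurd h (by simp)
  choose q hqF hq1 using hex
  have hn : ∀ a ∈ S.image (fun u => (q u).2),
      (S.filter fun x => (q x).2 = a).card ≤ k := by
    intro a _
    set c := (mkGraph F).connectedComponentMk (Sum.inr a) with hc
    refine le_trans (Finset.card_le_card_of_injOn (fun u => (u, a)) ?_ ?_) (hcomp c).1
    · intro u hu
      rw [Finset.mem_coe, Finset.mem_filter] at hu
      have hmemuv : (u, a) ∈ F := by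
        have : q u = (u, a) := Prod.ext (hq1 u) hu.2
        exact this ▸ hqF u
      rw [Finset.mem_coe, componentEdges, Finset.mem_filter]
      refine ⟨hmemuv, ?_⟩
      rw [hc]
      exact (SimpleGraph.ConnectedComponent.eq).mpr (mkGraph_adj hmemuv).reachable
    · intro u _ u' _ huu'
      exact congrArg Prod.fst huu'
  refine le_trans (Finset.card_le_mul_card_image S k hn) ?_
  refine Nat.mul_le_mul_left k (Finset.card_le_card ?_)
  intro v hv
  rw [Finset.mem_image] at hv
  obtain ⟨u, hu, hv⟩ := hv
  rw [nbhd, Finset.mem_image]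
  exact ⟨q u, Finset.mem_filter.mpr ⟨hFE (hqF u), (hq1 u).symm ▸ hu⟩, hv⟩

lemma count_right [Fintype U] [Fintype V] {k : ℕ} {E F : Finset (U × V)}
    (hSC : IsStarCover k E F) (T : Finset V) : T.card ≤ k * (nbhdR E T).card := by
  obtain ⟨hFE, hcov, hcomp⟩ := hSC
  have hex : ∀ v : V, ∃ p, p ∈ F ∧ p.2 = v := by
    intro v
    obtain ⟨p, hp, hor⟩ := hcov (Sum.inr v)
    rcases hor with h | h
    · exact absurd h (by simp)
    · exact ⟨p, hp, (Sum.inr.inj h).symm⟩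
  choose q hqF hq2 using hex
  have hn : ∀ a ∈ T.image (fun v => (q v).1),
      (T.filter fun x => (q x).1 = a).card ≤ k := by
    intro a _
    set c := (mkGraph F).connectedComponentMk (Sum.inl a) with hc
    refine le_trans (Finset.card_le_card_of_injOn (fun v => (a, v)) ?_ ?_) (hcomp c).1
    · intro v hv
      rw [Finset.mem_coe, Finset.mem_filter] at hv
      have hmemuv : (a, v) ∈ F := by
        have : q v = (a, v) := Prod.ext hv.2 (hq2 v)
        exact this ▸ hqF v
      rw [Finset.mem_coe, componentEdges, Finset.mem_filter]
      exact ⟨hmemuv, rfl⟩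
    · intro v _ v' _ hvv'
      exact congrArg Prod.snd hvv'
  refine le_trans (Finset.card_le_mul_card_image T k hn) ?_
  refine Nat.mul_le_mul_left k (Finset.card_le_card ?_)
  intro u hu
  rw [Finset.mem_image] at hu
  obtain ⟨v, hv, hu⟩ := hu
  rw [nbhdR, Finset.mem_image]
  exact ⟨q v, Finset.mem_filter.mpr ⟨hFE (hqF v), (hq2 v).symm ▸ hv⟩, hu⟩

end StarCoverAux

open StarCoverAux in
/-- **Theorem 10 (stars).** A bipartite graph `G = (U,V,E)` has a `k`-star covering
iff `|Γ(S)| ≥ (1/k)·|S|` for every `S ⊆ U` and every `S ⊆ V`. -/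
theorem stmt_9 {U V : Type*} [Fintype U] [Fintype V] (k : ℕ) (hk : 1 ≤ k)
    (E : Finset (U × V)) :
    (∃ F : Finset (U × V), IsStarCover k E F) ↔
      ((∀ S : Finset U, (1 / (k : ℝ)) * S.card ≤ ((nbhd E S).card : ℝ)) ∧
       (∀ S : Finset V, (1 / (k : ℝ)) * S.card ≤ ((nbhdR E S).card : ℝ))) := by
  have hk0 : (0 : ℝ) < (k : ℝ) := by
    have : (1 : ℝ) ≤ (k : ℝ) := by exact_mod_cast hk
    linarith
  constructor
  · rintro ⟨F, hSC⟩
    constructor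
    · intro S
      have h1 : (S.card : ℝ) ≤ (k : ℝ) * ((nbhd E S).card : ℝ) := by
        exact_mod_cast count_left hSC S
      rw [one_div, inv_mul_le_iff₀ hk0]
      exact h1
    · intro T
      have h1 : (T.card : ℝ) ≤ (k : ℝ) * ((nbhdR E T).card : ℝ) := by
        exact_mod_cast count_right hSC T
      rw [one_div, inv_mul_le_iff₀ hk0]
      exact h1
  · rintro ⟨hU, hV⟩
    have hUnat : ∀ S : Finset U, S.card ≤ k * (nbhd E S).card := by
      intro S
      have := hU S
      rw [one_div, inv_mul_le_iff₀ hk0] at this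
      exact_mod_cast this
    have hVnat : ∀ T : Finset V, T.card ≤ k * (nbhdR E T).card := by
      intro T
      have := hV T
      rw [one_div, inv_mul_le_iff₀ hk0] at this
      exact_mod_cast this
    obtain ⟨f, hfE, hff⟩ := hall_fun k hk E hUnat
    obtain ⟨g, hgE', hgf⟩ := hall_fun k hk (E.image Prod.swap)
      (fun T => by rw [nbhd_swap]; exact hVnat T)
    have hgE : ∀ v, (g v, v) ∈ E := by
      intro v
      have hm := hgE' v
      simp only [Finset.mem_image] at hm
      obtain ⟨p, hp, hpe⟩ := hm
      rw [Prod.ext_iff] at hpe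
      have : p = (g v, v) := Prod.ext hpe.2 hpe.1
      exact this ▸ hp
    set hfun : U ⊕ V → U ⊕ V :=
      Sum.elim (fun u => Sum.inr (f u)) (fun v => Sum.inl (g v)) with hhfun
    set col : U ⊕ V → Bool := Sum.elim (fun _ => true) (fun _ => false) with hcoldef
    have hcol : ∀ x, col (hfun x) = ! col x := by rintro (u | v) <;> rfl
    set K : U ⊕ V → Prop := Ker hfun col with hKdef
    have prop1 : ∀ x, ¬ K x → K (hfun x) := ker_prop1 hfun col hcol
    have prop2 : ∀ x, K x → ∃ y, hfun y = x ∧ ¬ K y := ker_prop2 hfun col hcol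
    have hfun_l : ∀ u : U, hfun (Sum.inl u) = Sum.inr (f u) := fun u => rfl
    have hfun_r : ∀ v : V, hfun (Sum.inr v) = Sum.inl (g v) := fun v => rfl
    set F : Finset (U × V) :=
      ((Finset.univ.filter fun u : U => ¬ K (Sum.inl u)).image fun u => (u, f u)) ∪
      ((Finset.univ.filter fun v : V => ¬ K (Sum.inr v)).image fun v => (g v, v)) with hFdef
    have hmemF : ∀ p : U × V, p ∈ F ↔
        (¬ K (Sum.inl p.1) ∧ p.2 = f p.1) ∨ (¬ K (Sum.inr p.2) ∧ p.1 = g p.2) := by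
      intro p
      rw [hFdef]
      simp only [Finset.mem_union, Finset.mem_image, Finset.mem_filter, Finset.mem_univ,
        true_and]
      constructor
      · rintro (⟨u, hu, rfl⟩ | ⟨v, hv, rfl⟩)
        · exact Or.inl ⟨hu, rfl⟩
        · exact Or.inr ⟨hv, rfl⟩
      · rintro (⟨hu, hp2⟩ | ⟨hv, hp1⟩)
        · exact Or.inl ⟨p.1, hu, Prod.ext rfl hp2.symm⟩
        · exact Or.inr ⟨p.2, hv, Prod.ext hp1.symm rfl⟩
    set ctr : U ⊕ V → U ⊕ V := fun x => if K x then x else hfun x with hctrdef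
    have hctrK : ∀ x, K x → ctr x = x := by
      intro x hx; rw [hctrdef]; simp only [if_pos hx]
    have hctrnK : ∀ x, ¬ K x → ctr x = hfun x := by
      intro x hx; rw [hctrdef]; simp only [if_neg hx]
    have H1 : CtrHyp F ctr := by
      intro p hp
      rw [hmemF] at hp
      rcases hp with ⟨hnK, hpf⟩ | ⟨hnK, hpg⟩
      · right
        have hK2 : K (Sum.inr p.2) := by
          have h := prop1 _ hnK
          rw [hfun_l] at h
          rw [hpf]
          exact h
        constructor
        · rw [hctrnK _ hnK, hfun_l, hpf]
        · exact hctrK _ hK2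
      · left
        have hK2 : K (Sum.inl p.1) := by
          have h := prop1 _ hnK
          rw [hfun_r] at h
          rw [hpg]
          exact h
        exact ⟨hctrK _ hK2, by rw [hctrnK _ hnK, hfun_r, hpg]⟩
    have H2 : ∀ x : U ⊕ V, (F.filter fun p => ctr (Sum.inl p.1) = x).card ≤ k := by
      rintro (u0 | v0)
      · have key : ∀ p ∈ F.filter fun p => ctr (Sum.inl p.1) = Sum.inl u0,
            p.1 = u0 ∧ g p.2 = u0 := by
          intro p hp
          rw [Finset.mem_filter] at hp
          obtain ⟨hpF, hce⟩ := hp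
          have hKp : K (Sum.inl p.1) := by
            by_contra hnK
            rw [hctrnK _ hnK, hfun_l] at hce
            exact absurd hce (by simp)
          have hp1 : p.1 = u0 := by
            rw [hctrK _ hKp] at hce
            exact Sum.inl.inj hce
          rw [hmemF] at hpF
          rcases hpF with ⟨hnK, -⟩ | ⟨-, hpg⟩
          · exact absurd hKp hnK
          · exact ⟨hp1, by rw [← hpg]; exact hp1⟩
        refine le_trans (Finset.card_le_card_of_injOn (fun p => p.2) ?_ ?_) (hgf u0)
        · intro p hp
          rw [Finset.mem_coe, Finset.mem_filter]
          exact ⟨Finset.mem_univ _, (key p hp).2⟩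
        · intro p hp q hq hpq
          have h1 := (key p hp).1
          have h2 := (key q hq).1
          exact Prod.ext (h1.trans h2.symm) hpq
      · have key : ∀ p ∈ F.filter fun p => ctr (Sum.inl p.1) = Sum.inr v0,
            p.2 = v0 ∧ f p.1 = v0 := by
          intro p hp
          rw [Finset.mem_filter] at hp
          obtain ⟨hpF, hce⟩ := hp
          have hnKp : ¬ K (Sum.inl p.1) := by
            intro hKp
            rw [hctrK _ hKp] at hce
            exact absurd hce (by simp)
          have hf1 : f p.1 = v0 := by
            rw [hctrnK _ hnKp, hfun_l] at hce
            exact Sum.inr.inj hce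
          rw [hmemF] at hpF
          rcases hpF with ⟨-, hpf⟩ | ⟨hnKv, hpg⟩
          · exact ⟨by rw [hpf]; exact hf1, hf1⟩
          · exfalso
            have h := prop1 _ hnKv
            rw [hfun_r, ← hpg] at h
            exact hnKp h
        refine le_trans (Finset.card_le_card_of_injOn (fun p => p.1) ?_ ?_) (hff v0)
        · intro p hp
          rw [Finset.mem_coe, Finset.mem_filter]
          exact ⟨Finset.mem_univ _, (key p hp).2⟩
        · intro p hp q hq hpq
          have h1 := (key p hp).1
          have h2 := (key q hq).1
          exact Prod.ext hpq (h1.trans h2.symm)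
    have H3 : ∀ x : U ⊕ V, ∃ p ∈ F, x = Sum.inl p.1 ∨ x = Sum.inr p.2 := by
      rintro (u | v)
      · by_cases hKu : K (Sum.inl u)
        · obtain ⟨y, hy, hnKy⟩ := prop2 _ hKu
          rcases y with u' | v'
          · rw [hfun_l] at hy
            exact absurd hy (by simp)
          · rw [hfun_r] at hy
            have hgv : g v' = u := Sum.inl.inj hy
            refine ⟨(g v', v'), ?_, Or.inl (by rw [hgv])⟩
            rw [hmemF]
            exact Or.inr ⟨hnKy, rfl⟩
        · refine ⟨(u, f u), ?_, Or.inl rfl⟩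
          rw [hmemF]
          exact Or.inl ⟨hKu, rfl⟩
      · by_cases hKv : K (Sum.inr v)
        · obtain ⟨y, hy, hnKy⟩ := prop2 _ hKv
          rcases y with u' | v'
          · rw [hfun_l] at hy
            have hfu : f u' = v := Sum.inr.inj hy
            refine ⟨(u', f u'), ?_, Or.inr (by rw [hfu])⟩
            rw [hmemF]
            exact Or.inl ⟨hnKy, rfl⟩
          · rw [hfun_r] at hy
            exact absurd hy (by simp)
        · refine ⟨(g v, v), ?_, Or.inr rfl⟩
          rw [hmemF]
          exact Or.inr ⟨hKv, rfl⟩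
    have hFE : F ⊆ E := by
      intro p hp
      rw [hmemF] at hp
      rcases hp with ⟨-, hpf⟩ | ⟨-, hpg⟩
      · have hpe : p = (p.1, f p.1) := Prod.ext rfl hpf
        rw [hpe]
        exact hfE p.1
      · have hpe : p = (g p.2, p.2) := Prod.ext hpg rfl
        rw [hpe]
        exact hgE p.2
    exact ⟨F, isStarCover_of_ctr H1 k E hFE H2 H3⟩
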